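/- arXiv:2604.25394 — 5 statements merged into one kernel-verified Lean document; each statement's English description precedes it below -/
import Mathlib

section
/- Let N = 16n + 14 for some nonnegative integer n. Then σ₁(N) ≡ 0 (mod 8). -/
open ArithmeticFunction Finset
open scoped ArithmeticFunction.sigma

lemma key_pair (a b : ℕ) (h : (a * b) % 8 = 7) : (a + b) % 8 = 0 := by
  have h1 : a % 8 < 8 := Nat.mod_lt _ (by norm_num)
  have h2 : b % 8 < 8 := Nat.mod_lt _ (by norm_num)
  rw [Nat.mul_mod] at h
  rw [Nat.add_mod]
  interval_cases h3 : a % 8 <;> interval_cases h4 : b % 8 <;> omega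

lemma sigma_aux (m : ℕ) (hm : m % 8 = 7) : 8 ∣ ∑ d ∈ m.divisors, d := by
  have hm0 : m ≠ 0 := by omega
  rw [← ZMod.natCast_eq_zero_iff, Nat.cast_sum]
  refine Finset.sum_involution (fun d _ => m / d) ?_ ?_ ?_ ?_
  · intro d hd
    obtain ⟨hdvd, -⟩ := Nat.mem_divisors.mp hd
    have hmul : d * (m / d) = m := Nat.mul_div_cancel' hdvd
    have h8 : (d + m / d) % 8 = 0 := key_pair _ _ (by rw [hmul]; exact hm)
    have : ((d + m / d : ℕ) : ZMod 8) = 0 := by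
      rw [ZMod.natCast_eq_zero_iff]
      omega
    simpa using this
  · intro d hd _
    obtain ⟨hdvd, -⟩ := Nat.mem_divisors.mp hd
    intro heq
    have hmul : d * (m / d) = m := Nat.mul_div_cancel' hdvd
    rw [heq] at hmul
    have h1 : d % 8 < 8 := Nat.mod_lt _ (by norm_num)
    have := Nat.mul_mod d d 8
    rw [hmul] at this
    interval_cases h3 : d % 8 <;> omega
  · intro d hd
    obtain ⟨hdvd, -⟩ := Nat.mem_divisors.mp hd
    exact Nat.mem_divisors.mpr ⟨Nat.div_dvd_of_dvd hdvd, hm0⟩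
  · intro d hd
    obtain ⟨hdvd, -⟩ := Nat.mem_divisors.mp hd
    exact Nat.div_div_self hdvd hm0

theorem stmt_5 (N n : ℕ) (hN : N = 16 * n + 14) :
    (∑ d ∈ N.divisors, d) % 8 = 0 := by
  have hm : N = 2 * (8 * n + 7) := by omega
  set m := 8 * n + 7 with hmdef
  have hcop : Nat.Coprime 2 m := by
    simp [Nat.coprime_two_left, Nat.odd_iff]
    omega
  have h1 : σ 1 N = σ 1 2 * σ 1 m := by
    rw [hm]; exact isMultiplicative_sigma.map_mul_of_coprime hcop
  have h2 : σ 1 2 = 3 := by decide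
  have h3 : 8 ∣ σ 1 m := by
    rw [sigma_one_apply]
    exact sigma_aux m (by omega)
  have : 8 ∣ σ 1 N := by rw [h1, h2]; exact Dvd.dvd.mul_left h3 3
  rw [← sigma_one_apply]
  omega
end

section
/- Let N = 196n + 70 for some nonnegative integer n. Then σ₁(N) ≡ 0 (mod 8). -/
theorem stmt_6 (N n : ℕ) (hN : N = 196 * n + 70) :
    (∑ d ∈ N.divisors, d) % 8 = 0 := by
  have hco : Nat.Coprime 7 (28 * n + 10) := by
    refine (Nat.Prime.coprime_iff_not_dvd (by norm_num)).mpr ?_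
    omega
  have hN' : N = 7 * (28 * n + 10) := by omega
  rw [hN', hco.sum_divisors_mul]
  have h7 : (∑ d ∈ Nat.divisors 7, d) = 8 := by decide
  rw [h7]
  omega
end

section
/- Let m be a nonnegative integer and r an integer. Then 98m + 35 − 2r² is never a perfect square. -/
theorem stmt_13 (m : ℕ) (r : ℤ) :
    ¬ ∃ c : ℤ, (98 * (m : ℤ) + 35 - 2 * r ^ 2) = c ^ 2 := by
  rintro ⟨c, hc⟩
  have h : ((c : ZMod 49)) ^ 2 + 2 * (r : ZMod 49) ^ 2 = 35 := by
    have := congrArg (Int.cast : ℤ → ZMod 49) hc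
    push_cast at this
    rw [show ((98 : ZMod 49)) = 0 by decide] at this
    linear_combination -this
  revert h
  have : ∀ a b : ZMod 49, a ^ 2 + 2 * b ^ 2 ≠ 35 := by decide
  exact this _ _
end

section
/- Let N = 196m + 70 and let r be an integer with (2r)² < N. Then σ₀(N − (2r)²) ≡ 0 (mod 4). -/
lemma isSquare_of_odd_card_divisors {k : ℕ} (hk : k ≠ 0)
    (h : Odd k.divisors.card) : IsSquare k := by
  rw [Nat.card_divisors hk] at h
  have he : ∀ p ∈ k.primeFactors, Even (k.factorization p) := by
    intro p hp
    by_contra hodd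
    have h2 : 2 ∣ k.factorization p + 1 := by
      rw [Nat.even_iff] at hodd; omega
    have hdvd : (k.factorization p + 1) ∣ k.primeFactors.prod (k.factorization · + 1) :=
      Finset.dvd_prod_of_mem _ hp
    have h3 : 2 ∣ k.primeFactors.prod (k.factorization · + 1) := h2.trans hdvd
    rw [Nat.odd_iff] at h
    omega
  refine ⟨∏ p ∈ k.primeFactors, p ^ (k.factorization p / 2), ?_⟩
  conv_lhs => rw [← Nat.factorization_prod_pow_eq_self hk]
  rw [Finsupp.prod, Nat.support_factorization, ← Finset.prod_mul_distrib]
  refine Finset.prod_congr rfl fun p hp => ?_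
  have := he p hp
  rw [Nat.even_iff] at this
  rw [← pow_add]
  congr 1
  omega

theorem stmt_14 (N m : ℕ) (hN : N = 196 * m + 70) (r : ℤ)
    (hr : (2 * r) ^ 2 < (N : ℤ)) :
    (((N : ℤ) - (2 * r) ^ 2).toNat).divisors.card % 4 = 0 := by
  set t : ℕ := r.natAbs with ht
  have hts : ((t : ℤ)) ^ 2 = r ^ 2 := by
    rw [ht, Int.natCast_natAbs, sq_abs]
  have hcast : (2 * r) ^ 2 = ((4 * t ^ 2 : ℕ) : ℤ) := by
    push_cast
    rw [hts]; ring
  have hlt : 4 * t ^ 2 < N := by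
    rw [hcast] at hr
    exact_mod_cast hr
  have htn : ((N : ℤ) - (2 * r) ^ 2).toNat = N - 4 * t ^ 2 := by
    rw [hcast, ← Nat.cast_sub hlt.le, Int.toNat_natCast]
  rw [htn]
  set n : ℕ := N - 4 * t ^ 2 with hn
  have hsum : n + 4 * t ^ 2 = 196 * m + 70 := by omega
  -- n ≡ 2 mod 4
  have hn4 : n % 4 = 2 := by omega
  set k : ℕ := n / 2 with hk
  have hnk : n = 2 * k := by omega
  have hkodd : k % 2 = 1 := by omega
  have hcop : Nat.Coprime 2 k := by
    refine (Nat.prime_two.coprime_iff_not_dvd).mpr ?_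
    intro hd
    omega
  rw [hnk, hcop.card_divisors_mul]
  have h2 : (Nat.divisors 2).card = 2 := by decide
  rw [h2]
  -- suffices: card of divisors of k is even
  suffices hkc : k.divisors.card % 2 = 0 by omega
  by_contra hodd
  have hk0 : k ≠ 0 := by omega
  have hsq : IsSquare k := isSquare_of_odd_card_divisors hk0 (by
    rw [Nat.odd_iff]; omega)
  obtain ⟨s, hs⟩ := hsq
  -- now 2*s^2 + 4*t^2 = 196*m + 70
  have heq : 2 * s ^ 2 + 4 * t ^ 2 = 196 * m + 70 := by
    have : k = s ^ 2 := by rw [hs]; ring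
    omega
  have h7 : 7 ∣ 2 * s ^ 2 + 4 * t ^ 2 := by omega
  have hz : (2 * (s : ZMod 7) ^ 2 + 4 * (t : ZMod 7) ^ 2) = 0 := by
    have := (ZMod.natCast_eq_zero_iff (2 * s ^ 2 + 4 * t ^ 2) 7).mpr h7
    push_cast at this
    exact this
  have key : ∀ a b : ZMod 7, 2 * a ^ 2 + 4 * b ^ 2 = 0 → a = 0 ∧ b = 0 := by decide
  obtain ⟨ha, hb⟩ := key _ _ hz
  obtain ⟨a, haa⟩ := (ZMod.natCast_eq_zero_iff s 7).mp ha
  obtain ⟨b, hbb⟩ := (ZMod.natCast_eq_zero_iff t 7).mp hb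
  rw [haa, hbb] at heq
  have heq2 : 98 * a ^ 2 + 196 * b ^ 2 = 196 * m + 70 := by
    have := heq
    ring_nf at this ⊢
    omega
  omega
end

section
/- Let N = 6n with gcd(n, 6) = 1, and let a be an integer with (3a)² < N. Then σ₀(N − (3a)²) ≡ 0 (mod 4). -/
lemma aux_even_card_divisors (m : ℕ) (hm : m ≠ 0) (h : ¬ IsSquare m) :
    m.divisors.card % 2 = 0 := by
  by_contra hodd
  have hcard := Nat.card_divisors hm
  have hkey : ∀ p ∈ m.primeFactors, Even (m.factorization p) := by
    intro p hp
    by_contra hne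
    have h2 : 2 ∣ (m.factorization p + 1) := by
      rcases Nat.even_or_odd (m.factorization p) with he | ho
      · exact absurd he hne
      · obtain ⟨k, hk⟩ := ho; omega
    have hdvd : (m.factorization p + 1) ∣ m.divisors.card := by
      rw [hcard]; exact Finset.dvd_prod_of_mem _ hp
    have : 2 ∣ m.divisors.card := h2.trans hdvd
    omega
  apply h
  refine ⟨m.factorization.prod fun p e => p ^ (e / 2), ?_⟩
  conv_lhs => rw [← Nat.factorization_prod_pow_eq_self hm]
  rw [Finsupp.prod, Finsupp.prod, ← Finset.prod_mul_distrib]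
  refine Finset.prod_congr rfl fun p hp => ?_
  rw [← pow_add]
  congr 1
  obtain ⟨k, hk⟩ := hkey p (by rwa [Nat.support_factorization] at hp)
  omega

theorem stmt_15 (N n : ℕ) (hN : N = 6 * n) (hgcd : Nat.gcd n 6 = 1) (a : ℤ)
    (ha : (3 * a) ^ 2 < (N : ℤ)) :
    (((N : ℤ) - (3 * a) ^ 2).toNat).divisors.card % 4 = 0 := by
  set M : ℕ := ((N : ℤ) - (3 * a) ^ 2).toNat with hMdef
  have hsq : (0:ℤ) ≤ (3 * a) ^ 2 := sq_nonneg _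
  have hMZ : (M : ℤ) = (N : ℤ) - (3 * a) ^ 2 := Int.toNat_of_nonneg (by linarith)
  have hMpos : 0 < M := by
    have : (0:ℤ) < (M:ℤ) := by rw [hMZ]; linarith
    exact_mod_cast this
  have hn2 : ¬ 2 ∣ n := fun hd => by
    have : 2 ∣ Nat.gcd n 6 := Nat.dvd_gcd hd (by norm_num)
    omega
  have hn3 : ¬ 3 ∣ n := fun hd => by
    have : 3 ∣ Nat.gcd n 6 := Nat.dvd_gcd hd (by norm_num)
    omega
  have h3M : 3 ∣ M := by
    have : (3:ℤ) ∣ (M:ℤ) := by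
      rw [hMZ, hN]; push_cast; exact ⟨2 * n - 3 * a ^ 2, by ring⟩
    exact_mod_cast this
  obtain ⟨m, hm⟩ := h3M
  have h9M : ¬ 3 ∣ m := by
    intro hd
    have h9 : (9:ℤ) ∣ (M:ℤ) := by
      obtain ⟨k, hk⟩ := hd
      exact ⟨k, by rw [hm, hk]; push_cast; ring⟩
    have : (9:ℤ) ∣ 6 * (n:ℤ) := by
      have : (6:ℤ) * n = (M:ℤ) + 9 * a ^ 2 := by rw [hMZ, hN]; push_cast; ring
      rw [this]; exact dvd_add h9 ⟨a ^ 2, by ring⟩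
    have h3n : (3:ℤ) ∣ (n:ℤ) := by
      obtain ⟨k, hk⟩ := this
      exact ⟨2 * k - n, by linarith⟩
    exact hn3 (by exact_mod_cast h3n)
  have hcop : Nat.Coprime 3 m := (Nat.Prime.coprime_iff_not_dvd (by norm_num)).2 h9M
  have hm0 : m ≠ 0 := by rintro rfl; omega
  have hnsq : ¬ IsSquare m := by
    rintro ⟨c, rfl⟩
    have heq : 2 * (n:ℤ) = 3 * a ^ 2 + (c:ℤ) ^ 2 := by
      have h1 : (M:ℤ) = 3 * ((c:ℤ) * (c:ℤ)) := by rw [hm]; push_cast; ring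
      rw [hMZ, hN] at h1
      push_cast at h1
      nlinarith [h1]
    have h4 : (2 : ZMod 4) * (n : ℕ) = 3 * (a : ZMod 4) ^ 2 + ((c : ℕ) : ZMod 4) ^ 2 := by
      have := congrArg (fun z : ℤ => (z : ZMod 4)) heq
      push_cast at this
      exact this
    have hnodd : (2 : ZMod 4) * (n : ℕ) = 2 := by
      obtain ⟨k, hk⟩ : ∃ k, n = 2 * k + 1 := ⟨n / 2, by omega⟩
      rw [hk]; push_cast; ring_nf
      have : (4 : ZMod 4) = 0 := by decide
      rw [show ((2:ZMod 4) + k * 4) = 2 + 4 * k by ring, this]; ring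
    have hsq4 : ∀ x : ZMod 4, x ^ 2 = 0 ∨ x ^ 2 = 1 := by decide
    rw [hnodd] at h4
    rcases hsq4 (a : ZMod 4) with h1 | h1 <;> rcases hsq4 ((c : ℕ) : ZMod 4) with h2 | h2 <;>
      rw [h1, h2] at h4 <;> revert h4 <;> decide
  have heven := aux_even_card_divisors m hm0 hnsq
  have h3card : (3 : ℕ).divisors.card = 2 := by decide
  rw [hm, Nat.Coprime.card_divisors_mul hcop, h3card]
  omega
end
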